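/- (Soundness of Reduction Rule 2.) Let G be an embedded digraph with nonnegative rational edge weights w, and let e₀ ∈ E be an edge both of whose endpoints tail e₀ and head e₀ are bimodal in G. Let G' = G[E ∖ {e₀}] be the embedded digraph obtained by deleting e₀, each vertex keeping the induced cyclic ordering. Then MBW(G, w) = MBW(G', w) + w(e₀); equivalently, G has a bimodal spanning subgraph of weight at least W if and only if G' has one of weight at least W − w(e₀). -/

import Mathlib

open scoped Classical

/-- An embedded digraph: a finite edge set `edges` within an ambient type `E`,
maps `tail, head : E → V` with `tail e ≠ head e` for edges, and for each vertex a
cyclic ordering `rot v` (a list, considered up to rotation) containing exactly once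
each dart at `v`.  A dart is a pair `(e, b)` where `b = true` marks the in-dart
(with `head e = v`) and `b = false` the out-dart (with `tail e = v`). -/
structure EmbDigraph (V : Type*) (E : Type*) where
  edges : Finset E
  tail : E → V
  head : E → V
  tail_ne_head : ∀ e ∈ edges, tail e ≠ head e
  rot : V → List (E × Bool)
  rot_nodup : ∀ u : V, (rot u).Nodup
  mem_rot : ∀ (u : V) (d : E × Bool),
    d ∈ rot u ↔ d.1 ∈ edges ∧ ((d.2 = true ∧ head d.1 = u) ∨ (d.2 = false ∧ tail d.1 = u))

namespace EmbDigraph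

variable {V : Type*} {E : Type*}

/-- A list of booleans consisting of a block of `true`s followed by a block of
`false`s: all in-darts precede all out-darts. -/
def IsTwoBlock (l : List Bool) : Prop :=
  ∃ a b : ℕ, l = List.replicate a true ++ List.replicate b false

/-- Vertex `u` is bimodal in the spanning subgraph `G[F]`: some rotation of its
dart list, restricted to the darts of edges in `F`, has all in-darts preceding all
out-darts. -/
def VertexBimodalIn (G : EmbDigraph V E) (F : Finset E) (u : V) : Prop :=
  ∃ n : ℕ,
    IsTwoBlock ((((G.rot u).rotate n).filter fun d => decide (d.1 ∈ F)).map Prod.snd)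

/-- The spanning subgraph `G[F]` is bimodal: every vertex is bimodal in it. -/
def BimodalIn (G : EmbDigraph V E) (F : Finset E) : Prop :=
  ∀ u : V, G.VertexBimodalIn F u

/-- A vertex is good if it is bimodal in `G` itself; otherwise it is bad. -/
def Good (G : EmbDigraph V E) (u : V) : Prop :=
  G.VertexBimodalIn G.edges u

/-- `m` is the maximum weight `MBW(G, w)` of a bimodal spanning subgraph of `G`. -/
def IsMBW (G : EmbDigraph V E) (w : E → ℚ) (m : ℚ) : Prop :=
  IsGreatest {x : ℚ | ∃ F : Finset E, F ⊆ G.edges ∧ G.BimodalIn F ∧ ∑ e ∈ F, w e = x} m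

end EmbDigraph

open EmbDigraph

section Aux

lemma twoblock_aux_sublist {l l' : List Bool} (h : l'.Sublist l)
    (hl : ∃ a b : ℕ, l = List.replicate a true ++ List.replicate b false) :
    ∃ a b : ℕ, l' = List.replicate a true ++ List.replicate b false := by
  obtain ⟨a, b, rfl⟩ := hl
  rw [List.sublist_append_iff] at h
  obtain ⟨l₁, l₂, rfl, h1, h2⟩ := h
  rw [List.sublist_replicate_iff] at h1 h2
  obtain ⟨a', -, rfl⟩ := h1
  obtain ⟨b', -, rfl⟩ := h2
  exact ⟨a', b', rfl⟩

lemma filter_rotate_aux {α : Type*} (p : α → Bool) (l : List α) (n : ℕ) :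
    ∃ m, (l.rotate n).filter p = (l.filter p).rotate m := by
  rcases eq_or_ne l [] with rfl | hl
  · exact ⟨0, by simp⟩
  have hlen : 0 < l.length := List.length_pos_iff.2 hl
  have hkl : n % l.length ≤ l.length := (Nat.mod_lt _ hlen).le
  refine ⟨((l.take (n % l.length)).filter p).length, ?_⟩
  rw [← List.rotate_mod, List.rotate_eq_drop_append_take hkl, List.filter_append]
  have hsplit : l.filter p =
      (l.take (n % l.length)).filter p ++ (l.drop (n % l.length)).filter p := by
    rw [← List.filter_append, List.take_append_drop]
  rw [hsplit, List.rotate_append_length_eq]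

lemma rotate_filter_aux {α : Type*} (p : α → Bool) (l : List α) (m : ℕ) :
    ∃ n, (l.filter p).rotate m = (l.rotate n).filter p := by
  induction m with
  | zero => exact ⟨0, by simp⟩
  | succ m ih =>
    obtain ⟨n, hn⟩ := ih
    rcases h : (l.rotate n).filter p with - | ⟨a, as⟩
    · refine ⟨n, ?_⟩
      rw [← List.rotate_rotate, hn, h]
      simp
    · rw [List.filter_eq_cons_iff] at h
      obtain ⟨l₁, l₂, hsplit, h₁, ha, h₂⟩ := h
      refine ⟨n + (l₁.length + 1), ?_⟩
      have hL : (l.filter p).rotate (m + 1) = as ++ [a] := by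
        rw [← List.rotate_rotate, hn, hsplit]
        have : List.filter p (l₁ ++ a :: l₂) = a :: as := by
          rw [List.filter_eq_cons_iff]
          exact ⟨l₁, l₂, rfl, h₁, ha, h₂⟩
        rw [this, List.rotate_cons_succ, List.rotate_zero]
      have hR : (l.rotate (n + (l₁.length + 1))).filter p = as ++ [a] := by
        rw [← List.rotate_rotate, hsplit]
        have hsplit2 : l₁ ++ a :: l₂ = (l₁ ++ [a]) ++ l₂ := by simp
        have hlen2 : l₁.length + 1 = (l₁ ++ [a]).length := by simp
        rw [hsplit2, hlen2, List.rotate_append_length_eq, List.filter_append,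
          List.filter_append, h₂, List.filter_eq_nil_iff.2 h₁]
        simp [ha]
      rw [hL, hR]

/-- cyclic two-block property of a dart list -/
def DTB {α : Type*} (l : List (α × Bool)) : Prop :=
  ∃ n : ℕ, ∃ a b : ℕ,
    ((l.rotate n).map Prod.snd) = List.replicate a true ++ List.replicate b false

lemma DTB_filter {α : Type*} {l : List (α × Bool)} (q : α × Bool → Bool) (h : DTB l) :
    DTB (l.filter q) := by
  obtain ⟨n, hn⟩ := h
  obtain ⟨m, hm⟩ := filter_rotate_aux q l n
  refine ⟨m, twoblock_aux_sublist ?_ hn⟩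
  rw [← hm]
  exact (List.filter_sublist).map _

lemma DTB_rotate {α : Type*} (l : List (α × Bool)) (k : ℕ) : DTB (l.rotate k) ↔ DTB l := by
  constructor
  · rintro ⟨n, hn⟩
    exact ⟨k + n, by rwa [List.rotate_rotate] at hn⟩
  · rintro ⟨n, hn⟩
    rcases eq_or_ne l [] with rfl | hl
    · exact ⟨0, by simpa using hn⟩
    · have hlen : 0 < l.length := List.length_pos_iff.2 hl
      refine ⟨n + (l.length - k % l.length), ?_⟩
      rw [List.rotate_rotate]
      have key : l.rotate (k + (n + (l.length - k % l.length))) = l.rotate n := by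
        rw [← List.rotate_mod]
        conv_rhs => rw [← List.rotate_mod]
        congr 1
        have h1 : k % l.length + l.length * (k / l.length) = k := Nat.mod_add_div k l.length
        have h2 : k % l.length < l.length := Nat.mod_lt _ hlen
        have h3 : (n + l.length * (k / l.length) + l.length) % l.length = n % l.length := by
          rw [Nat.add_mod_right, Nat.add_mul_mod_self_left]
        rw [← h3]
        congr 1
        omega
      rw [key]
      exact hn

end Aux


/- ========= graph-level ========= -/
namespace EmbDigraph
variable {V : Type*} {E : Type*}

lemma vbm_iff_DTB (G : EmbDigraph V E) (F : Finset E) (u : V) :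
    G.VertexBimodalIn F u ↔ DTB ((G.rot u).filter fun d => decide (d.1 ∈ F)) := by
  constructor
  · rintro ⟨n, hn⟩
    obtain ⟨m, hm⟩ := filter_rotate_aux (fun d => decide (d.1 ∈ F)) (G.rot u) n
    refine ⟨m, ?_⟩
    rw [hm] at hn
    exact hn
  · rintro ⟨n, hn⟩
    obtain ⟨n', hn'⟩ := rotate_filter_aux (fun d => decide (d.1 ∈ F)) (G.rot u) n
    refine ⟨n', ?_⟩
    rw [hn'] at hn
    exact hn

lemma good_imp_all (G : EmbDigraph V E) {u : V} (h : G.Good u) (F : Finset E) :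
    G.VertexBimodalIn F u := by
  rw [Good, vbm_iff_DTB] at h
  rw [vbm_iff_DTB]
  have hself : ((G.rot u).filter fun d => decide (d.1 ∈ G.edges)) = G.rot u :=
    List.filter_eq_self.2 fun d hd => by
      simp only [decide_eq_true_eq]
      exact ((G.mem_rot u d).1 hd).1
  rw [hself] at h
  exact DTB_filter _ h

lemma vbm_del_iff (G G' : EmbDigraph V E) (e₀ : E)
    (hrot : ∀ u : V, ∃ n : ℕ,
      G'.rot u = ((G.rot u).filter fun d => decide (d.1 ≠ e₀)).rotate n)
    {F : Finset E} (hF : e₀ ∉ F) (u : V) :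
    G'.VertexBimodalIn F u ↔ G.VertexBimodalIn F u := by
  obtain ⟨k, hk⟩ := hrot u
  rw [vbm_iff_DTB, vbm_iff_DTB, hk]
  obtain ⟨m, hm⟩ := filter_rotate_aux (fun d => decide (d.1 ∈ F))
    ((G.rot u).filter fun d => decide (d.1 ≠ e₀)) k
  rw [hm, DTB_rotate, List.filter_filter]
  have heq : List.filter (fun a => decide (a.1 ∈ F) && decide (a.1 ≠ e₀)) (G.rot u)
      = List.filter (fun d => decide (d.1 ∈ F)) (G.rot u) := by
    refine List.filter_congr fun d _ => ?_
    by_cases h : d.1 ∈ F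
    · have hne : d.1 ≠ e₀ := fun he => hF (he ▸ h)
      simp [h, hne]
    · simp [h]
  rw [heq]

lemma vbm_erase (G : EmbDigraph V E) (e₀ : E) {F : Finset E} {u : V}
    (h : G.VertexBimodalIn F u) : G.VertexBimodalIn (F.erase e₀) u := by
  rw [vbm_iff_DTB] at h ⊢
  have := DTB_filter (fun d => decide (d.1 ≠ e₀)) h
  rw [List.filter_filter] at this
  have heq : List.filter (fun a => decide (a.1 ≠ e₀) && decide (a.1 ∈ F)) (G.rot u)
      = List.filter (fun d => decide (d.1 ∈ F.erase e₀)) (G.rot u) := by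
    refine List.filter_congr fun d _ => ?_
    by_cases h1 : d.1 ∈ F <;> by_cases h2 : d.1 = e₀ <;>
      simp [h1, h2, Finset.mem_erase]
  rw [heq] at this
  exact this

lemma vbm_insert_of_not_endpoint (G : EmbDigraph V E) (e₀ : E) {F : Finset E} {u : V}
    (hu1 : u ≠ G.tail e₀) (hu2 : u ≠ G.head e₀)
    (h : G.VertexBimodalIn F u) : G.VertexBimodalIn (insert e₀ F) u := by
  rw [vbm_iff_DTB] at h ⊢
  have heq : ((G.rot u).filter fun d => decide (d.1 ∈ insert e₀ F))
      = (G.rot u).filter fun d => decide (d.1 ∈ F) := by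
    refine List.filter_congr fun d hd => ?_
    have hne : d.1 ≠ e₀ := by
      rintro rfl
      rcases ((G.mem_rot u d).1 hd).2 with ⟨-, hh⟩ | ⟨-, hh⟩
      · exact hu2 hh.symm
      · exact hu1 hh.symm
    simp [Finset.mem_insert, hne]
  rw [heq]
  exact h

end EmbDigraph


/-- Soundness of Reduction Rule 2: if both endpoints of `e₀` are bimodal in `G`,
and `G'` is obtained from `G` by deleting `e₀` (each vertex keeping the induced
cyclic ordering), then `MBW(G, w) = MBW(G', w) + w e₀`; equivalently, `G` has a
bimodal spanning subgraph of weight `≥ W` iff `G'` has one of weight `≥ W - w e₀`. -/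
theorem reduction_rule_delete_good_edge {V E : Type*}
    (G G' : EmbDigraph V E) (w : E → ℚ) (hw : ∀ e, 0 ≤ w e)
    (e₀ : E) (he₀ : e₀ ∈ G.edges)
    (htail : G.Good (G.tail e₀)) (hhead : G.Good (G.head e₀))
    (hE : G'.edges = G.edges.erase e₀)
    (ht : G'.tail = G.tail) (hh : G'.head = G.head)
    (hrot : ∀ u : V, ∃ n : ℕ,
      G'.rot u = ((G.rot u).filter fun d => decide (d.1 ≠ e₀)).rotate n) :
    (∀ m m' : ℚ, G.IsMBW w m → G'.IsMBW w m' → m = m' + w e₀) ∧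
      (∀ W : ℚ,
        (∃ F : Finset E, F ⊆ G.edges ∧ G.BimodalIn F ∧ W ≤ ∑ e ∈ F, w e) ↔
          (∃ F : Finset E, F ⊆ G'.edges ∧ G'.BimodalIn F ∧ W - w e₀ ≤ ∑ e ∈ F, w e)) := by
  have he₀G' : e₀ ∉ G'.edges := by rw [hE]; exact Finset.notMem_erase _ _
  have fwd : ∀ F : Finset E, F ⊆ G.edges → G.BimodalIn F →
      (F.erase e₀ ⊆ G'.edges ∧ G'.BimodalIn (F.erase e₀) ∧
        ∑ e ∈ F, w e ≤ ∑ e ∈ F.erase e₀, w e + w e₀) := by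
    intro F hsub hB
    refine ⟨?_, ?_, ?_⟩
    · rw [hE]; exact Finset.erase_subset_erase _ hsub
    · intro u
      have h1 := vbm_erase G e₀ (hB u)
      exact (vbm_del_iff G G' e₀ hrot (Finset.notMem_erase _ _) u).2 h1
    · by_cases he : e₀ ∈ F
      · exact le_of_eq (Finset.sum_erase_add F w he).symm
      · rw [Finset.erase_eq_of_notMem he]
        linarith [hw e₀]
  have bwd : ∀ F : Finset E, F ⊆ G'.edges → G'.BimodalIn F →
      (insert e₀ F ⊆ G.edges ∧ G.BimodalIn (insert e₀ F) ∧
        ∑ e ∈ insert e₀ F, w e = ∑ e ∈ F, w e + w e₀) := by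
    intro F hsub hB
    have hFe : e₀ ∉ F := fun h => he₀G' (hsub h)
    have hFG : F ⊆ G.edges := fun x hx => Finset.mem_of_mem_erase (hE ▸ hsub hx)
    refine ⟨Finset.insert_subset he₀ hFG, ?_, ?_⟩
    · intro u
      by_cases h1 : u = G.tail e₀
      · exact good_imp_all G (h1 ▸ htail) _
      by_cases h2 : u = G.head e₀
      · exact good_imp_all G (h2 ▸ hhead) _
      · have hF := (vbm_del_iff G G' e₀ hrot hFe u).1 (hB u)
        exact vbm_insert_of_not_endpoint G e₀ h1 h2 hF
    · rw [Finset.sum_insert hFe]; ring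
  constructor
  · intro m m' hm hm'
    obtain ⟨F, hF1, hF2, hF3⟩ := hm.1
    obtain ⟨F', hF'1, hF'2, hF'3⟩ := hm'.1
    obtain ⟨g1, g2, g3⟩ := fwd F hF1 hF2
    obtain ⟨k1, k2, k3⟩ := bwd F' hF'1 hF'2
    have h1 : ∑ e ∈ F.erase e₀, w e ≤ m' := hm'.2 ⟨F.erase e₀, g1, g2, rfl⟩
    have h2 : ∑ e ∈ insert e₀ F', w e ≤ m := hm.2 ⟨insert e₀ F', k1, k2, rfl⟩
    linarith
  · intro W
    constructor
    · rintro ⟨F, h1, h2, h3⟩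
      obtain ⟨g1, g2, g3⟩ := fwd F h1 h2
      exact ⟨F.erase e₀, g1, g2, by linarith⟩
    · rintro ⟨F, h1, h2, h3⟩
      obtain ⟨k1, k2, k3⟩ := bwd F h1 h2
      exact ⟨insert e₀ F, k1, k2, by linarith⟩
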